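/- For integers q ≥ 1 and k ≥ 0, the number of q-Raney sequences with k terms equal to −q, i.e. sequences (b_1, …, b_{(q+1)k+1}) of length (q+1)k+1 with every term in {1, −q}, exactly k terms equal to −q, and every partial sum b_1 + ⋯ + b_j (1 ≤ j ≤ (q+1)k+1) positive, equals the generalized Catalan number C_k^q = (1/(qk+1)) · binom((q+1)k, k). -/

import Mathlib

namespace QRaneyAux

/-- Partial sums of a sequence. -/
def S (c : ℕ → ℤ) (j : ℕ) : ℤ := ∑ i ∈ Finset.range j, c i

lemma S_succ (c : ℕ → ℤ) (j : ℕ) : S c (j + 1) = S c j + c j :=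
  Finset.sum_range_succ c j

lemma S_add_period {n : ℕ} {c : ℕ → ℤ} (hper : ∀ j, c (j + n) = c j)
    (hsum : S c n = 1) (j : ℕ) : S c (j + n) = S c j + 1 := by
  induction j with
  | zero => simpa [S] using hsum
  | succ j ih =>
    have h : j + 1 + n = (j + n) + 1 := by ring
    rw [h, S_succ, ih, hper, S_succ]; ring

lemma S_add_period_mul {n : ℕ} {c : ℕ → ℤ} (hper : ∀ j, c (j + n) = c j)
    (hsum : S c n = 1) (t x : ℕ) : S c (x + t * n) = S c x + t := by
  induction t with
  | zero => simp
  | succ t ih =>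
    have h : x + (t + 1) * n = (x + t * n) + n := by ring
    rw [h, S_add_period hper hsum, ih]; push_cast; ring

/-- `i` is a good starting index: all window sums of length `1..n` starting at `i`
are positive. -/
def Good (c : ℕ → ℤ) (n i : ℕ) : Prop := ∀ m, 1 ≤ m → m ≤ n → S c i < S c (i + m)

lemma good_forall {n : ℕ} {c : ℕ → ℤ} (hn : 0 < n) (hper : ∀ j, c (j + n) = c j)
    (hsum : S c n = 1) {i : ℕ} (hg : Good c n i) :
    ∀ j, i < j → S c i < S c j := by
  intro j hij
  have hdm := Nat.div_add_mod (j - i - 1) n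
  set t := (j - i - 1) / n with ht
  set r := (j - i - 1) % n with hr
  have hrn : r < n := Nat.mod_lt _ hn
  have hj : j = (i + (r + 1)) + t * n := by
    calc j = i + 1 + (j - i - 1) := by omega
    _ = i + 1 + (n * t + r) := by rw [hdm]
    _ = (i + (r + 1)) + t * n := by ring
  have h1 : S c i < S c (i + (r + 1)) := hg (r + 1) (by omega) (by omega)
  have h2 : S c ((i + (r + 1)) + t * n) = S c (i + (r + 1)) + t :=
    S_add_period_mul hper hsum t _
  rw [hj, h2]
  have : (0 : ℤ) ≤ t := by positivity
  linarith

lemma exists_good {n : ℕ} {c : ℕ → ℤ} (hn : 0 < n) (hper : ∀ j, c (j + n) = c j)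
    (hsum : S c n = 1) : ∃ i < n, Good c n i := by
  obtain ⟨i₀, hi₀, hmin⟩ := Finset.exists_min_image (Finset.range n) (S c)
    ⟨0, Finset.mem_range.mpr hn⟩
  classical
  set T := (Finset.range n).filter (fun i => ∀ j ∈ Finset.range n, S c i ≤ S c j) with hT
  have hTne : T.Nonempty := ⟨i₀, by simp only [hT, Finset.mem_filter]; exact ⟨hi₀, hmin⟩⟩
  set i := T.max' hTne with hi
  have hiT : i ∈ T := T.max'_mem hTne
  have hin : i < n := Finset.mem_range.mp (Finset.mem_filter.mp hiT).1
  have hilow : ∀ j ∈ Finset.range n, S c i ≤ S c j := (Finset.mem_filter.mp hiT).2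
  refine ⟨i, hin, ?_⟩
  intro m h1 hm
  rcases lt_or_ge (i + m) n with hlt | hge
  · have hle : S c i ≤ S c (i + m) := hilow _ (Finset.mem_range.mpr hlt)
    rcases lt_or_eq_of_le hle with h | h
    · exact h
    · exfalso
      have hmem : i + m ∈ T := by
        simp only [hT, Finset.mem_filter, Finset.mem_range]
        exact ⟨hlt, fun j hj => h ▸ hilow j (Finset.mem_range.mpr hj)⟩
      have := T.le_max' _ hmem
      omega
  · have hr : i + m - n < n := by omega
    have heq : i + m = (i + m - n) + n := by omega
    have : S c (i + m) = S c (i + m - n) + 1 := by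
      have h' := S_add_period hper hsum (i + m - n)
      rw [← heq] at h'; exact h'
    have hle : S c i ≤ S c (i + m - n) := hilow _ (Finset.mem_range.mpr hr)
    omega

lemma good_unique {n : ℕ} {c : ℕ → ℤ} (hn : 0 < n) (hper : ∀ j, c (j + n) = c j)
    (hsum : S c n = 1) {i i' : ℕ} (hi : i < n) (hi' : i' < n)
    (hg : Good c n i) (hg' : Good c n i') : i = i' := by
  have key : ∀ a b : ℕ, a < n → b < n → Good c n a → Good c n b → ¬ a < b := by
    intro a b ha hb hga hgb hab
    have h1 : S c a < S c b := good_forall hn hper hsum hga b hab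
    have h2 : S c b < S c (b + (a + n - b)) := hgb (a + n - b) (by omega) (by omega)
    have h3 : b + (a + n - b) = a + n := by omega
    rw [h3, S_add_period hper hsum] at h2
    omega
  rcases lt_trichotomy i i' with h | h | h
  · exact absurd h (key i i' hi hi' hg hg')
  · exact h
  · exact absurd h (key i' i hi' hi hg' hg)

/-- The periodic extension of a list. -/
def cf (b : List ℤ) : ℕ → ℤ := fun j => b.getD (j % b.length) 0

lemma cf_per (b : List ℤ) : ∀ j, cf b (j + b.length) = cf b j := by
  intro j; simp [cf, Nat.add_mod_right]

lemma take_sum (b : List ℤ) : ∀ m, m ≤ b.length → (b.take m).sum = S (cf b) m := by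
  intro m
  induction m with
  | zero => simp [S]
  | succ m ih =>
    intro hm
    have hlt : m < b.length := hm
    rw [List.sum_take_succ b m hlt, S_succ, ih (le_of_lt hlt)]
    simp only [List.get_eq_getElem, cf, Nat.mod_eq_of_lt hlt]
    rw [List.getD_eq_getElem _ _ hlt]

lemma S_len (b : List ℤ) : S (cf b) b.length = b.sum := by
  rw [← take_sum b b.length le_rfl, List.take_length]

lemma rotate_take_sum (b : List ℤ) (hn : 0 < b.length) (i : ℕ) :
    ∀ m, m ≤ b.length → ((b.rotate i).take m).sum = S (cf b) (i + m) - S (cf b) i := by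
  intro m
  induction m with
  | zero => simp
  | succ m ih =>
    intro hm
    have hlt : m < b.length := hm
    have hlt' : m < (b.rotate i).length := by rw [List.length_rotate]; exact hlt
    rw [List.sum_take_succ _ m hlt', ih (le_of_lt hlt)]
    have hget : (b.rotate i)[m] = cf b (i + m) := by
      rw [List.getElem_rotate]
      simp only [cf]
      rw [List.getD_eq_getElem _ _ (Nat.mod_lt _ hn)]
      congr 2
      omega
    rw [hget]
    have h2 : i + (m + 1) = (i + m) + 1 := by ring
    rw [h2, S_succ]
    ring

/-- Goodness of a list: all nonempty partial sums are positive. -/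
def GoodL (b : List ℤ) : Prop := ∀ m, 1 ≤ m → m ≤ b.length → 0 < (b.take m).sum

lemma goodL_rotate_iff (b : List ℤ) (hn : 0 < b.length) (i : ℕ) :
    GoodL (b.rotate i) ↔ Good (cf b) b.length i := by
  constructor
  · intro h m h1 hm
    have := h m h1 (by rwa [List.length_rotate])
    rw [rotate_take_sum b hn i m hm] at this
    omega
  · intro h m h1 hm
    rw [List.length_rotate] at hm
    rw [rotate_take_sum b hn i m hm]
    have := h m h1 hm
    omega

/-- The cycle lemma: a list of integers with sum `1` has a unique rotation all of
whose partial sums are positive. -/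
lemma existsUnique_good_rotate (b : List ℤ) (hn : 0 < b.length) (hsum : b.sum = 1) :
    ∃! i, i < b.length ∧
      (∀ m, 1 ≤ m → m ≤ (b.rotate i).length → 0 < ((b.rotate i).take m).sum) := by
  have hper := cf_per b
  have hS : S (cf b) b.length = 1 := by rw [S_len, hsum]
  obtain ⟨i, hi, hg⟩ := exists_good hn hper hS
  refine ⟨i, ⟨hi, (goodL_rotate_iff b hn i).mpr hg⟩, ?_⟩
  rintro j ⟨hj, hgj⟩
  exact good_unique hn hper hS hj hi ((goodL_rotate_iff b hn j).mp hgj) hg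

lemma sum_eq_length_sub {q : ℕ} (hq : 1 ≤ q) :
    ∀ l : List ℤ, (∀ x ∈ l, x = 1 ∨ x = -(q : ℤ)) →
      l.sum = (l.length : ℤ) - ((q : ℤ) + 1) * l.count (-(q : ℤ)) := by
  intro l
  induction l with
  | nil => simp
  | cons a t ih =>
    intro hmem
    have hmt : ∀ x ∈ t, x = 1 ∨ x = -(q : ℤ) := fun x hx => hmem x (List.mem_cons_of_mem a hx)
    have hq1 : (1 : ℤ) ≤ (q : ℤ) := by exact_mod_cast hq
    have hne : -(q : ℤ) ≠ 1 := by omega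
    rcases hmem a List.mem_cons_self with h | h
    · subst h
      rw [List.sum_cons, ih hmt, List.count_cons]
      simp only [beq_iff_eq, if_neg (Ne.symm hne), List.length_cons]
      push_cast
      ring
    · subst h
      rw [List.sum_cons, ih hmt, List.count_cons]
      simp only [beq_iff_eq, if_pos rfl, List.length_cons]
      push_cast
      ring

lemma count_eq_iff_sum {q k : ℕ} (hq : 1 ≤ q) (l : List ℤ)
    (hmem : ∀ x ∈ l, x = 1 ∨ x = -(q : ℤ)) (hlen : l.length = (q + 1) * k + 1) :
    l.count (-(q : ℤ)) = k ↔ l.sum = 1 := by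
  rw [sum_eq_length_sub hq l hmem, hlen]
  constructor
  · intro h; rw [h]; push_cast; ring
  · intro h
    have hc : ((q : ℤ) + 1) * l.count (-(q : ℤ)) = ((q : ℤ) + 1) * k := by
      push_cast at h ⊢
      linarith
    have hq0 : ((q : ℤ) + 1) ≠ 0 := by positivity
    exact_mod_cast mul_left_cancel₀ hq0 hc

open Finset in
lemma key_sum (q : ℕ) (hq : 1 ≤ q) (b : List ℤ)
    (hmem : ∀ x ∈ b, x = 1 ∨ x = -(q : ℤ)) :
    b.sum = (b.length : ℤ) - ((q : ℤ) + 1) *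
      ((Finset.univ.filter (fun j : Fin b.length => b.getD (j : ℕ) 0 = -(q : ℤ))).card : ℤ) := by
  have hne1 : (1 : ℤ) ≠ -(q : ℤ) := by
    have : (1 : ℤ) ≤ (q : ℤ) := by exact_mod_cast hq
    omega
  have h1 : b.sum = ∑ j : Fin b.length, b.getD (j : ℕ) 0 := by
    rw [← S_len b]
    show (∑ i ∈ Finset.range b.length, cf b i) = _
    rw [← Fin.sum_univ_eq_sum_range]
    exact Finset.sum_congr rfl fun j _ => by simp [cf, Nat.mod_eq_of_lt j.isLt]
  have h2 : (∑ j : Fin b.length, b.getD (j : ℕ) 0) =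
      ∑ j : Fin b.length, (if b.getD (j : ℕ) 0 = -(q : ℤ) then -(q : ℤ) else 1) := by
    refine Finset.sum_congr rfl fun j _ => ?_
    have hj : (j : ℕ) < b.length := j.isLt
    have hmemj : b.getD (j : ℕ) 0 ∈ b := by
      rw [List.getD_eq_getElem _ _ hj]; exact List.getElem_mem hj
    rcases hmem _ hmemj with h | h
    · rw [h, if_neg hne1]
    · rw [h, if_pos rfl]
  set c1 := (Finset.univ.filter (fun j : Fin b.length => b.getD (j : ℕ) 0 = -(q : ℤ))).card with hc1
  have hsplit := Finset.card_filter_add_card_filter_not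
    (s := (Finset.univ : Finset (Fin b.length)))
    (p := fun j => b.getD (j : ℕ) 0 = -(q : ℤ))
  rw [Finset.card_univ, Fintype.card_fin] at hsplit
  rw [h1, h2, Finset.sum_ite, Finset.sum_const, Finset.sum_const]
  have hsplit' : (c1 : ℤ) + ((Finset.univ.filter (fun j : Fin b.length =>
      ¬ b.getD (j : ℕ) 0 = -(q : ℤ))).card : ℤ) = (b.length : ℤ) := by
    exact_mod_cast hsplit
  simp only [nsmul_eq_mul, mul_one]
  linear_combination hsplit'

lemma card_B (q k : ℕ) (hq : 1 ≤ q) :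
    Nat.card {b : List ℤ // b.length = (q + 1) * k + 1 ∧
        (∀ x ∈ b, x = 1 ∨ x = -(q : ℤ)) ∧ b.count (-(q : ℤ)) = k} =
      ((q + 1) * k + 1).choose k := by
  set n := (q + 1) * k + 1 with hn
  have hne1 : (1 : ℤ) ≠ -(q : ℤ) := by
    have : (1 : ℤ) ≤ (q : ℤ) := by exact_mod_cast hq
    omega
  have hq0 : ((q : ℤ) + 1) ≠ 0 := by positivity
  -- card of the filter for elements of B
  have hcardfil : ∀ b : List ℤ, b.length = n → (∀ x ∈ b, x = 1 ∨ x = -(q : ℤ)) →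
      b.count (-(q : ℤ)) = k →
      (Finset.univ.filter (fun j : Fin n => b.getD (j : ℕ) 0 = -(q : ℤ))).card = k := by
    intro b hlen hmem hcount
    rw [← hlen]
    have hsum1 : b.sum = 1 := (count_eq_iff_sum hq b hmem (by rw [hlen])).mp hcount
    have hkey := key_sum q hq b hmem
    rw [hsum1] at hkey
    have hc : ((q : ℤ) + 1) * ((Finset.univ.filter
        (fun j : Fin b.length => b.getD (j : ℕ) 0 = -(q : ℤ))).card : ℤ) =
        ((q : ℤ) + 1) * k := by
      have hbl : ((b.length : ℕ) : ℤ) = ((q : ℤ) + 1) * k + 1 := by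
        rw [hlen, hn]; push_cast; ring
      linarith [hkey, hbl]
    exact_mod_cast mul_left_cancel₀ hq0 hc
  have hofFn_filter : ∀ t : Finset (Fin n),
      (Finset.univ.filter (fun j : Fin n =>
        (List.ofFn (fun j' : Fin n => if j' ∈ t then -(q : ℤ) else 1)).getD (j : ℕ) 0
          = -(q : ℤ))) = t := by
    intro t
    ext j
    have hjl : (j : ℕ) < (List.ofFn (fun j' : Fin n =>
        if j' ∈ t then -(q : ℤ) else 1)).length := by
      rw [List.length_ofFn]; exact j.isLt
    simp only [Finset.mem_filter, Finset.mem_univ, true_and]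
    rw [List.getD_eq_getElem _ _ hjl, List.getElem_ofFn]
    by_cases hj : j ∈ t
    · simp [hj]
    · simp [hj, hne1]
  have hofFn_mem : ∀ t : Finset (Fin n), ∀ x ∈ (List.ofFn (fun j' : Fin n =>
      if j' ∈ t then -(q : ℤ) else 1)), x = 1 ∨ x = -(q : ℤ) := by
    intro t x hx
    rw [List.mem_ofFn] at hx
    obtain ⟨j, rfl⟩ := hx
    by_cases hj : j ∈ t
    · simp [hj]
    · simp [hj]
  have hofFn_len : ∀ t : Finset (Fin n), (List.ofFn (fun j' : Fin n =>
      if j' ∈ t then -(q : ℤ) else 1)).length = n := fun t => List.length_ofFn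
  have hofFn_count : ∀ t : Finset (Fin n), t.card = k →
      (List.ofFn (fun j' : Fin n =>
        if j' ∈ t then -(q : ℤ) else 1)).count (-(q : ℤ)) = k := by
    intro t ht
    refine (count_eq_iff_sum hq _ (hofFn_mem t) (by rw [hofFn_len t, hn])).mpr ?_
    rw [List.sum_ofFn, Finset.sum_ite, Finset.sum_const, Finset.sum_const]
    have h1 : Finset.univ.filter (fun j : Fin n => j ∈ t) = t := by ext j; simp
    have h2 : Finset.univ.filter (fun j : Fin n => ¬ j ∈ t) = tᶜ := by ext j; simp
    rw [h1, h2, Finset.card_compl, ht, Fintype.card_fin]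
    simp only [nsmul_eq_mul, mul_one]
    have hkn : k ≤ n := by
      rw [hn]
      calc k = 1 * k := (one_mul k).symm
      _ ≤ (q + 1) * k := Nat.mul_le_mul_right k (by omega)
      _ ≤ (q + 1) * k + 1 := Nat.le_succ _
    rw [Nat.cast_sub hkn, hn]
    push_cast
    ring
  have e : {b : List ℤ // b.length = n ∧
        (∀ x ∈ b, x = 1 ∨ x = -(q : ℤ)) ∧ b.count (-(q : ℤ)) = k} ≃
      {t : Finset (Fin n) // t.card = k} :=
    { toFun := fun b => ⟨Finset.univ.filter
        (fun j : Fin n => b.1.getD (j : ℕ) 0 = -(q : ℤ)),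
        hcardfil b.1 b.2.1 b.2.2.1 b.2.2.2⟩
      invFun := fun t => ⟨List.ofFn (fun j' : Fin n => if j' ∈ t.1 then -(q : ℤ) else 1),
        hofFn_len t.1, hofFn_mem t.1, hofFn_count t.1 t.2⟩
      left_inv := by
        rintro ⟨b, hlen, hmem, hcount⟩
        apply Subtype.ext
        dsimp only
        apply List.ext_getElem (by rw [List.length_ofFn, hlen])
        intro j h1 h2
        rw [List.getElem_ofFn]
        simp only [Finset.mem_filter, Finset.mem_univ, true_and]
        have hjb : j < b.length := h2
        have hgd : b.getD j 0 = b[j] := List.getD_eq_getElem _ _ hjb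
        rcases hmem _ (List.getElem_mem hjb) with h | h
        · rw [hgd, h, if_neg hne1]
        · rw [hgd, h, if_pos rfl]
      right_inv := by
        rintro ⟨t, ht⟩
        apply Subtype.ext
        exact hofFn_filter t }
  rw [Nat.card_congr e, Nat.card_eq_fintype_card, Fintype.card_finset_len, Fintype.card_fin]

end QRaneyAux

open QRaneyAux

/-- For `q ≥ 1` and `k ≥ 0`, the number of `q`-Raney sequences with `k` terms equal to
`−q` — sequences of length `(q+1)k+1` with every term in `{1, −q}`, exactly `k` terms
equal to `−q`, and every partial sum positive — equals the generalized Catalan number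
`C_k^q = (1/(qk+1)) · C((q+1)k, k)`. -/
theorem count_q_raney (q k : ℕ) (hq : 1 ≤ q) :
    (Nat.card {b : List ℤ // b.length = (q + 1) * k + 1 ∧
        (∀ x ∈ b, x = 1 ∨ x = -(q : ℤ)) ∧
        b.count (-(q : ℤ)) = k ∧
        (∀ m : ℕ, 1 ≤ m → m ≤ b.length → 0 < (b.take m).sum)} : ℚ) =
      1 / (q * k + 1) * Nat.choose ((q + 1) * k) k := by
  have hn0 : 0 < (q + 1) * k + 1 := Nat.succ_pos _
  suffices hmain : Nat.card {b : List ℤ // b.length = (q + 1) * k + 1 ∧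
      (∀ x ∈ b, x = 1 ∨ x = -(q : ℤ)) ∧
      b.count (-(q : ℤ)) = k ∧
      (∀ m : ℕ, 1 ≤ m → m ≤ b.length → 0 < (b.take m).sum)} * (q * k + 1) =
      ((q + 1) * k).choose k by
    have hq1 : ((q : ℚ) * k + 1) ≠ 0 := by positivity
    field_simp
    exact_mod_cast hmain
  -- the bijection (good lists) × Fin n ≃ (all lists)
  set f : ({b : List ℤ // b.length = (q + 1) * k + 1 ∧
      (∀ x ∈ b, x = 1 ∨ x = -(q : ℤ)) ∧
      b.count (-(q : ℤ)) = k ∧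
      (∀ m : ℕ, 1 ≤ m → m ≤ b.length → 0 < (b.take m).sum)} × Fin ((q + 1) * k + 1)) →
      {b : List ℤ // b.length = (q + 1) * k + 1 ∧
        (∀ x ∈ b, x = 1 ∨ x = -(q : ℤ)) ∧ b.count (-(q : ℤ)) = k} :=
    fun p => ⟨p.1.1.rotate p.2.1,
      by rw [List.length_rotate]; exact p.1.2.1,
      fun x hx => p.1.2.2.1 x ((List.rotate_perm _ _).mem_iff.mp hx),
      by rw [(List.rotate_perm p.1.1 p.2.1).count_eq]; exact p.1.2.2.2.1⟩ with hf
  have hbij : Function.Bijective f := by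
    constructor
    · rintro ⟨⟨a, ha1, ha2, ha3, ha4⟩, i⟩ ⟨⟨a', hb1, hb2, hb3, hb4⟩, i'⟩ h
      have h' : a.rotate i.1 = a'.rotate i'.1 := congrArg Subtype.val h
      have hsa : a.sum = 1 := (count_eq_iff_sum hq a ha2 ha1).mp ha3
      have ha0 : 0 < a.length := by rw [ha1]; exact hn0
      have eu := existsUnique_good_rotate a ha0 hsa
      set d := i.1 + (((q + 1) * k + 1) - i'.1) with hd
      have h1 : a.rotate d = a' := by
        have h2 : (a.rotate i.1).rotate (((q + 1) * k + 1) - i'.1) =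
            (a'.rotate i'.1).rotate (((q + 1) * k + 1) - i'.1) := by rw [h']
        rw [List.rotate_rotate, List.rotate_rotate] at h2
        have hii : i'.1 + (((q + 1) * k + 1) - i'.1) = (q + 1) * k + 1 := by
          have := i'.2; omega
        rw [hii] at h2
        have hrl : a'.rotate ((q + 1) * k + 1) = a' := by
          rw [← hb1, List.rotate_length]
        rw [hrl] at h2
        exact h2
      have hrotmod : a.rotate (d % ((q + 1) * k + 1)) = a' := by
        rw [show (q + 1) * k + 1 = a.length from ha1.symm, List.rotate_mod, h1]
      have h0good : 0 < a.length ∧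
          (∀ m, 1 ≤ m → m ≤ (a.rotate 0).length → 0 < ((a.rotate 0).take m).sum) := by
        refine ⟨ha0, ?_⟩
        rw [List.rotate_zero]
        exact ha4
      have hdgood : d % ((q + 1) * k + 1) < a.length ∧
          (∀ m, 1 ≤ m → m ≤ (a.rotate (d % ((q + 1) * k + 1))).length →
            0 < ((a.rotate (d % ((q + 1) * k + 1))).take m).sum) := by
        refine ⟨by rw [ha1]; exact Nat.mod_lt _ hn0, ?_⟩
        rw [hrotmod]
        exact hb4
      have hmod0 : d % ((q + 1) * k + 1) = 0 :=
        eu.unique hdgood h0good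
      have hii' : i.1 = i'.1 := by
        obtain ⟨t, ht⟩ := Nat.dvd_of_mod_eq_zero hmod0
        have hd1 : 0 < d := by have := i'.2; omega
        have hd2 : d < 2 * ((q + 1) * k + 1) := by have := i.2; have := i'.2; omega
        have ht1 : t = 1 := by
          rcases t with _ | _ | t
          · omega
          · rfl
          · exfalso
            have h2t : 2 * ((q + 1) * k + 1) ≤ ((q + 1) * k + 1) * (t + 1 + 1) := by
              calc 2 * ((q + 1) * k + 1) = ((q + 1) * k + 1) * 2 := by ring
              _ ≤ ((q + 1) * k + 1) * (t + 1 + 1) :=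
                Nat.mul_le_mul_left _ (by omega)
            omega
        rw [ht1, Nat.mul_one] at ht
        have := i.2; have := i'.2
        omega
      have haa' : a = a' := by
        rw [← h1, show d = (q + 1) * k + 1 by have := i'.2; omega,
          show (q + 1) * k + 1 = a.length from ha1.symm, List.rotate_length]
      subst haa'
      simp only [Prod.mk.injEq, Subtype.mk.injEq]
      exact ⟨trivial, Fin.ext hii'⟩
    · rintro ⟨s, hs1, hs2, hs3⟩
      have hssum : s.sum = 1 := (count_eq_iff_sum hq s hs2 hs1).mp hs3
      have hs0 : 0 < s.length := by rw [hs1]; exact hn0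
      obtain ⟨i, ⟨hi, hgi⟩, -⟩ := existsUnique_good_rotate s hs0 hssum
      refine ⟨⟨⟨s.rotate i,
        by rw [List.length_rotate]; exact hs1,
        fun x hx => hs2 x ((List.rotate_perm _ _).mem_iff.mp hx),
        by rw [(List.rotate_perm s i).count_eq]; exact hs3,
        by rw [List.length_rotate] at hgi ⊢; exact hgi⟩,
        ⟨(((q + 1) * k + 1) - i) % ((q + 1) * k + 1), Nat.mod_lt _ hn0⟩⟩, ?_⟩
      apply Subtype.ext
      show (s.rotate i).rotate ((((q + 1) * k + 1) - i) % ((q + 1) * k + 1)) = s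
      have hlr : (s.rotate i).length = (q + 1) * k + 1 := by rw [List.length_rotate]; exact hs1
      rw [show (((q + 1) * k + 1) - i) % ((q + 1) * k + 1) =
          (((q + 1) * k + 1) - i) % (s.rotate i).length from by rw [hlr],
        List.rotate_mod, List.rotate_rotate]
      have hin : i < (q + 1) * k + 1 := by rw [← hs1]; exact hi
      rw [show i + (((q + 1) * k + 1) - i) = (q + 1) * k + 1 by omega,
        show (q + 1) * k + 1 = s.length from hs1.symm, List.rotate_length]
  have hcardA : Nat.card {b : List ℤ // b.length = (q + 1) * k + 1 ∧
      (∀ x ∈ b, x = 1 ∨ x = -(q : ℤ)) ∧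
      b.count (-(q : ℤ)) = k ∧
      (∀ m : ℕ, 1 ≤ m → m ≤ b.length → 0 < (b.take m).sum)} * ((q + 1) * k + 1) =
      ((q + 1) * k + 1).choose k := by
    have h1 := Nat.card_eq_of_bijective f hbij
    rw [Nat.card_prod] at h1
    simp only [Nat.card_eq_fintype_card, Fintype.card_fin] at h1
    rw [← card_B q k hq, ← h1]
  have hid : ((q + 1) * k + 1).choose k * (q * k + 1) =
      ((q + 1) * k).choose k * ((q + 1) * k + 1) := by
    have h := Nat.choose_mul_succ_eq ((q + 1) * k) k
    have hsub : (q + 1) * k + 1 - k = q * k + 1 := by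
      have hqk : (q + 1) * k = q * k + k := by ring
      omega
    rw [hsub] at h
    exact h.symm
  apply Nat.eq_of_mul_eq_mul_right hn0
  calc Nat.card {b : List ℤ // b.length = (q + 1) * k + 1 ∧
      (∀ x ∈ b, x = 1 ∨ x = -(q : ℤ)) ∧
      b.count (-(q : ℤ)) = k ∧
      (∀ m : ℕ, 1 ≤ m → m ≤ b.length → 0 < (b.take m).sum)} * (q * k + 1) *
        ((q + 1) * k + 1)
      = (Nat.card {b : List ℤ // b.length = (q + 1) * k + 1 ∧
      (∀ x ∈ b, x = 1 ∨ x = -(q : ℤ)) ∧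
      b.count (-(q : ℤ)) = k ∧
      (∀ m : ℕ, 1 ≤ m → m ≤ b.length → 0 < (b.take m).sum)} * ((q + 1) * k + 1)) *
        (q * k + 1) := by ring
    _ = ((q + 1) * k + 1).choose k * (q * k + 1) := by rw [hcardA]
    _ = ((q + 1) * k).choose k * ((q + 1) * k + 1) := hid
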